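/- For every k ≥ 1, the loop p_k ∘ σ_1 : [0,1] → ℍ, which is a loop based at (0,0), is homotopic relative to its endpoints to the k!-fold concatenation c_k · c_k · ⋯ · c_k (defined on [0, k!·λ(k)] and affinely reparametrized to [0,1]). -/

import Mathlib

/-- The `j`-th entry (1-indexed) of a finite sequence of positive naturals,
viewed as a natural number. Only used for `1 ≤ j ≤ s.length`. -/
def nthSeq (s : List ℕ+) (j : ℕ) : ℕ := ↑(s.getD (j - 1) 1)

/-- The linear order `⪯` on finite sequences of positive natural numbers:
`s ⪯ t` iff either (a) there is an index `j ≤ min (ℓ s) (ℓ t)` which is the first index where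
`s` and `t` differ, and there `s j < t j`, or (b) `ℓ s ≤ ℓ t` and `t` extends `s`. -/
def sle (s t : List ℕ+) : Prop :=
  (∃ j, 1 ≤ j ∧ j ≤ min s.length t.length ∧
     (∀ i, 1 ≤ i → i < j → nthSeq s i = nthSeq t i) ∧ nthSeq s j < nthSeq t j) ∨
  (s.length ≤ t.length ∧ ∀ j, 1 ≤ j → j ≤ s.length → nthSeq s j = nthSeq t j)

/-- The strict version `≺` of the order `⪯`. -/
def slt (s t : List ℕ+) : Prop := sle s t ∧ s ≠ t

/-- The set `B` of nonempty sequences `s` with `s i ≤ i` for all `1 ≤ i ≤ ℓ s`. -/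
def BSet : Set (List ℕ+) := {s | 1 ≤ s.length ∧ ∀ i, 1 ≤ i → i ≤ s.length → nthSeq s i ≤ i}

/-- `λ n = 1 / (2^n n!)`. -/
noncomputable def lam (n : ℕ) : ℝ := 1 / ((2 : ℝ) ^ n * (n.factorial : ℝ))

/-- `τ s = Σ_{t ∈ B, t ≺ s} λ (ℓ t)`. -/
noncomputable def tau (s : List ℕ+) : ℝ :=
  ∑' t : {t : List ℕ+ // t ∈ BSet ∧ slt t s}, lam t.1.length

/-- The circle `L_n ⊂ ℝ² = ℂ` of radius `1/n` centred at `(1/n, 0)`. -/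
noncomputable def Lcirc (n : ℕ) : Set ℂ := Metric.sphere ((1 / (n : ℝ) : ℝ) : ℂ) (1 / (n : ℝ))

/-- The Hawaiian Earring `ℍ ⊂ ℝ² = ℂ`, the union of the circles `L_n`, `n ≥ 1`. -/
def HSet : Set ℂ := ⋃ n ∈ {n : ℕ | 1 ≤ n}, Lcirc n

open Classical in
/-- The metric `d` on the Hawaiian Earring: `d x y = ‖x - y‖` (Euclidean norm) if `x` and
`y` lie on a common circle `L_n`, and `d x y = ‖x‖ + ‖y‖` otherwise. -/
noncomputable def HEdist (x y : ℂ) : ℝ :=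
  if ∃ n : ℕ, 1 ≤ n ∧ x ∈ Lcirc n ∧ y ∈ Lcirc n then ‖x - y‖ else ‖x‖ + ‖y‖

/-- The loop `φ_n : [0,1] → ℍ` traversing the circle `L_n` at constant speed:
`φ_n t = (-cos(2πt)/n + 1/n, sin(2πt)/n)`. -/
noncomputable def phiLoop (n : ℕ) (t : ℝ) : ℂ :=
  Complex.ofReal (-(Real.cos (2 * Real.pi * t)) / n + 1 / n) +
    Complex.ofReal (Real.sin (2 * Real.pi * t) / n) * Complex.I

open Classical in
/-- The commutator loop `c_k : [0, λ k] → ℍ`: the concatenation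
`φ_{n_k} · φ_{n_k + 1} · φ_{n_k}⁻¹ · φ_{n_k + 1}⁻¹ : [0,4] → ℍ` precomposed with the
reparametrization `t ↦ 4 t / λ k`. -/
noncomputable def cLoop (nseq : ℕ → ℕ) (k : ℕ) (t : ℝ) : ℂ :=
  let u := 4 * t / lam k
  if u ≤ 1 then phiLoop (nseq k) u
  else if u ≤ 2 then phiLoop (nseq k + 1) (u - 1)
  else if u ≤ 3 then phiLoop (nseq k) (1 - (u - 2))
  else phiLoop (nseq k + 1) (1 - (u - 3))

open Classical in
/-- Concatenation of `f : [0,a] → ℂ` with `g` (translated to start at time `a`). -/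
noncomputable def concatAt (a : ℝ) (f g : ℝ → ℂ) : ℝ → ℂ :=
  fun t => if t ≤ a then f t else g (t - a)

/-- `iterConcat len f m` is the concatenation of `m + 1` copies of `f : [0, len] → ℂ`. -/
noncomputable def iterConcat (len : ℝ) (f : ℝ → ℂ) : ℕ → ℝ → ℂ
  | 0 => f
  | m + 1 => concatAt len f (iterConcat len f m)

open Classical in
/-- The retraction `p_k : ℍ → ℍ` onto `L_{n_k} ∪ L_{n_k + 1}`, which is the identity on
`L_{n_k} ∪ L_{n_k + 1}` and sends every other point to `(0,0)`. -/
noncomputable def pMap (nseq : ℕ → ℕ) (k : ℕ) (x : ℂ) : ℂ :=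
  if x ∈ Lcirc (nseq k) ∪ Lcirc (nseq k + 1) then x else 0

lemma zero_mem_HSet : (0 : ℂ) ∈ HSet := by
  have h1 : (0 : ℂ) ∈ Lcirc 1 := by
    simp [Lcirc, Metric.mem_sphere, Complex.dist_eq]
  exact Set.mem_biUnion (by norm_num : (1 : ℕ) ∈ {n : ℕ | 1 ≤ n}) h1

-- order section
lemma nthSeq_pos (s : List ℕ+) (j : ℕ) : 1 ≤ nthSeq s j := (s.getD (j-1) 1).one_le

/-- padded version of a sequence, as a function `ℕ → ℕ` (1-indexed, 0 beyond length) -/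
def pad (s : List ℕ+) (j : ℕ) : ℕ := if 1 ≤ j ∧ j ≤ s.length then nthSeq s j else 0

lemma pad_eq (s : List ℕ+) {j : ℕ} (h1 : 1 ≤ j) (h2 : j ≤ s.length) :
    pad s j = nthSeq s j := if_pos ⟨h1, h2⟩

lemma pad_eq_zero (s : List ℕ+) {j : ℕ} (h : s.length < j ∨ j = 0) : pad s j = 0 := by
  rcases h with h | h
  · exact if_neg (fun hc => absurd hc.2 (not_le.2 h))
  · subst h; exact if_neg (by simp)

lemma pad_ne_zero_iff (s : List ℕ+) (j : ℕ) : pad s j ≠ 0 ↔ (1 ≤ j ∧ j ≤ s.length) := by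
  constructor
  · intro h
    by_contra hc
    exact h (if_neg hc)
  · intro h
    rw [pad_eq s h.1 h.2]
    have := nthSeq_pos s j; omega

lemma pad_injective : Function.Injective pad := by
  intro s t h
  have hlen : s.length = t.length := by
    by_contra hc
    rcases Nat.lt_or_ge s.length t.length with hl | hl
    · have h1 : pad s t.length = 0 := pad_eq_zero s (Or.inl hl)
      have h2 : pad t t.length ≠ 0 := (pad_ne_zero_iff t _).2 ⟨by omega, le_rfl⟩
      exact h2 (by rw [← h]; exact h1)
    · rcases Nat.lt_or_ge t.length s.length with hl2 | hl2
      · have h1 : pad t s.length = 0 := pad_eq_zero t (Or.inl hl2)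
        have h2 : pad s s.length ≠ 0 := (pad_ne_zero_iff s _).2 ⟨by omega, le_rfl⟩
        exact h2 (by rw [h]; exact h1)
      · omega
  apply List.ext_getElem hlen
  intro i hi hi'
  have : pad s (i+1) = pad t (i+1) := by rw [h]
  rw [pad_eq s (by omega) (by omega), pad_eq t (by omega) (by omega)] at this
  unfold nthSeq at this
  simp only [Nat.add_sub_cancel] at this
  rw [List.getD_eq_getElem s 1 hi, List.getD_eq_getElem t 1 hi'] at this
  exact_mod_cast this

/-- the padded sequence as an element of the lexicographic order -/
noncomputable def padL (s : List ℕ+) : Lex (ℕ → ℕ) := toLex (pad s)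

lemma slt_iff_lex {s t : List ℕ+} : slt s t ↔ padL s < padL t := by
  constructor
  · rintro ⟨hle, hne⟩
    show Pi.Lex (· < ·) (fun {_} => (· < ·)) (pad s) (pad t)
    rcases hle with ⟨j, hj1, hjm, hag, hlt⟩ | ⟨hlen, hag⟩
    · refine ⟨j, fun i hij => ?_, ?_⟩
      · rcases Nat.eq_zero_or_pos i with rfl | hi
        · rw [pad_eq_zero s (Or.inr rfl), pad_eq_zero t (Or.inr rfl)]
        · rw [pad_eq s hi (by omega), pad_eq t hi (by omega)]
          exact hag i hi hij
      · rw [pad_eq s hj1 (by omega), pad_eq t hj1 (by omega)]; exact hlt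
    · have hlt : s.length < t.length := by
        rcases Nat.lt_or_ge s.length t.length with h | h
        · exact h
        · exfalso; apply hne
          apply pad_injective
          funext j
          rcases Nat.eq_zero_or_pos j with rfl | hj
          · rw [pad_eq_zero s (Or.inr rfl), pad_eq_zero t (Or.inr rfl)]
          · rcases Nat.lt_or_ge s.length j with hj2 | hj2
            · rw [pad_eq_zero s (Or.inl hj2), pad_eq_zero t (Or.inl (by omega))]
            · rw [pad_eq s hj hj2, pad_eq t hj (by omega)]
              exact hag j hj hj2
      refine ⟨s.length + 1, fun i hij => ?_, ?_⟩
      · rcases Nat.eq_zero_or_pos i with rfl | hi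
        · rw [pad_eq_zero s (Or.inr rfl), pad_eq_zero t (Or.inr rfl)]
        · rw [pad_eq s hi (by omega), pad_eq t hi (by omega)]
          exact hag i hi (by omega)
      · rw [pad_eq_zero s (Or.inl (by omega)), pad_eq t (by omega) (by omega)]
        have := nthSeq_pos t (s.length + 1); omega
  · intro hl
    obtain ⟨j, hag, hlt⟩ : Pi.Lex (· < ·) (fun {_} => (· < ·)) (pad s) (pad t) := hl
    have hne : s ≠ t := by
      rintro rfl; exact lt_irrefl _ hlt
    have hjt : 1 ≤ j ∧ j ≤ t.length := by
      rw [← pad_ne_zero_iff]; omega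
    refine ⟨?_, hne⟩
    rcases Nat.lt_or_ge s.length j with hjs | hjs
    · -- case b
      right
      have hlen : s.length ≤ t.length := by omega
      refine ⟨hlen, fun i hi his => ?_⟩
      have := hag i (by omega)
      rwa [pad_eq s hi his, pad_eq t hi (by omega)] at this
    · -- case a
      left
      refine ⟨j, hjt.1, by omega, fun i hi hij => ?_, ?_⟩
      · have := hag i hij
        rwa [pad_eq s hi (by omega), pad_eq t hi (by omega)] at this
      · rwa [pad_eq s hjt.1 hjs, pad_eq t hjt.1 hjt.2] at hlt

lemma sle_refl (s : List ℕ+) : sle s s := Or.inr ⟨le_rfl, fun _ _ _ => rfl⟩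

lemma sle_iff {s t : List ℕ+} : sle s t ↔ s = t ∨ slt s t := by
  constructor
  · intro h
    by_cases he : s = t
    · exact Or.inl he
    · exact Or.inr ⟨h, he⟩
  · rintro (rfl | h)
    · exact sle_refl s
    · exact h.1

lemma slt_trans {a b c : List ℕ+} (h1 : slt a b) (h2 : slt b c) : slt a c := by
  rw [slt_iff_lex] at *; exact lt_trans h1 h2

lemma slt_irrefl (a : List ℕ+) : ¬ slt a a := by
  rw [slt_iff_lex]; exact lt_irrefl _

lemma slt_total {a b : List ℕ+} (h : a ≠ b) : slt a b ∨ slt b a := by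
  have h' : padL a ≠ padL b := fun hc => h (pad_injective (by exact_mod_cast hc))
  rw [slt_iff_lex, slt_iff_lex]
  rcases lt_trichotomy (padL a) (padL b) with h1 | h1 | h1
  · exact Or.inl h1
  · exact absurd h1 h'
  · exact Or.inr h1

lemma sle_slt_trans {a b c : List ℕ+} (h1 : sle a b) (h2 : slt b c) : slt a c := by
  rcases sle_iff.1 h1 with rfl | h1
  · exact h2
  · exact slt_trans h1 h2

-- Part 2: summability and tau lemmas (assumes p1 content prepended)
open Classical in
noncomputable def fB (t : List ℕ+) : ℝ := if t ∈ BSet then lam t.length else 0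

open Classical in
noncomputable def ind (s t : List ℕ+) : ℝ := if t ∈ BSet ∧ slt t s then lam t.length else 0

lemma lam_pos (n : ℕ) : 0 < lam n := by
  unfold lam
  positivity

lemma fB_nonneg (t : List ℕ+) : 0 ≤ fB t := by
  unfold fB; split <;> simp [le_of_lt (lam_pos _)]

lemma ind_nonneg (s t : List ℕ+) : 0 ≤ ind s t := by
  unfold ind; split <;> simp [le_of_lt (lam_pos _)]

lemma ind_le_fB (s t : List ℕ+) : ind s t ≤ fB t := by
  unfold ind fB
  by_cases h : t ∈ BSet ∧ slt t s
  · rw [if_pos h, if_pos h.1]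
  · rw [if_neg h]
    split <;> simp [le_of_lt (lam_pos _)]

/-- the finset of tuples generating `BSet` elements of length `m` -/
noncomputable def tupFinset (m : ℕ) : Finset (Fin m → ℕ+) :=
  Fintype.piFinset (fun i => Finset.Icc 1 i.1.succPNat)

lemma card_tupFinset (m : ℕ) : (tupFinset m).card = m.factorial := by
  rw [tupFinset, Fintype.card_piFinset]
  have : ∀ i : Fin m, (Finset.Icc (1 : ℕ+) i.1.succPNat).card = i.1 + 1 := by
    intro i
    rw [PNat.card_Icc]
    simp [Nat.succPNat]
  rw [Finset.prod_congr rfl (fun i _ => this i)]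
  rw [Finset.prod_fin_eq_prod_range]
  have : ∀ i ∈ Finset.range m, (if h : i < m then i + 1 else 1) = i + 1 := by
    intro i hi
    rw [dif_pos (Finset.mem_range.1 hi)]
  rw [Finset.prod_congr rfl this]
  exact Finset.prod_range_add_one_eq_factorial m

lemma nthSeq_ofFn {m : ℕ} (v : Fin m → ℕ+) {j : ℕ} (h1 : 1 ≤ j) (h2 : j ≤ m) :
    nthSeq (List.ofFn v) j = v ⟨j - 1, by omega⟩ := by
  unfold nthSeq
  rw [List.getD_eq_getElem _ 1 (by simp; omega)]
  simp

lemma ofFn_mem_BSet_iff {m : ℕ} (v : Fin m → ℕ+) :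
    List.ofFn v ∈ BSet ↔ (1 ≤ m ∧ v ∈ tupFinset m) := by
  constructor
  · rintro ⟨h1, h2⟩
    simp only [List.length_ofFn] at h1 h2
    refine ⟨h1, ?_⟩
    rw [tupFinset, Fintype.mem_piFinset]
    intro i
    rw [Finset.mem_Icc]
    refine ⟨(v i).one_le, ?_⟩
    have := h2 (i.1 + 1) (by omega) (by omega)
    rw [nthSeq_ofFn v (by omega) (by omega)] at this
    have hi : (⟨i.1 + 1 - 1, by omega⟩ : Fin m) = i := by ext; simp
    rw [hi] at this
    rw [← PNat.coe_le_coe]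
    simpa [Nat.succPNat] using this
  · rintro ⟨h1, h2⟩
    rw [tupFinset, Fintype.mem_piFinset] at h2
    refine ⟨by simpa using h1, ?_⟩
    intro i hi1 hi2
    simp only [List.length_ofFn] at hi2
    rw [nthSeq_ofFn v hi1 hi2]
    have := h2 ⟨i - 1, by omega⟩
    rw [Finset.mem_Icc] at this
    have := this.2
    rw [← PNat.coe_le_coe] at this
    simp [Nat.succPNat] at this
    omega

noncomputable def hfun (m : ℕ) : ℝ := if 1 ≤ m then (m.factorial : ℝ) * lam m else 0

lemma fB_ofFn_ne_zero {m : ℕ} (v : Fin m → ℕ+) (h : fB (List.ofFn v) ≠ 0) :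
    v ∈ tupFinset m := by
  unfold fB at h
  by_cases hb : List.ofFn v ∈ BSet
  · exact ((ofFn_mem_BSet_iff v).1 hb).2
  · exact absurd (if_neg hb) h

lemma summable_inner (m : ℕ) : Summable fun v : Fin m → ℕ+ => fB (List.ofFn v) :=
  summable_of_ne_finset_zero (s := tupFinset m) (fun v hv => by
    by_contra h; exact hv (fB_ofFn_ne_zero v h))

lemma inner_eq (m : ℕ) : ∑' v : Fin m → ℕ+, fB (List.ofFn v) = hfun m := by
  rw [tsum_eq_sum (s := tupFinset m) (fun v hv => by
    by_contra h; exact hv (fB_ofFn_ne_zero v h))]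
  by_cases hm : 1 ≤ m
  · have : ∀ v ∈ tupFinset m, fB (List.ofFn v) = lam m := by
      intro v hv
      unfold fB
      rw [if_pos ((ofFn_mem_BSet_iff v).2 ⟨hm, hv⟩)]
      simp
    rw [Finset.sum_congr rfl this, Finset.sum_const, card_tupFinset, hfun, if_pos hm,
      nsmul_eq_mul]
  · have hm0 : m = 0 := by omega
    subst hm0
    have : ∀ v ∈ tupFinset 0, fB (List.ofFn v) = 0 := by
      intro v _
      unfold fB
      rw [if_neg]
      intro hb
      have := hb.1
      simp at this
    rw [Finset.sum_congr rfl this, Finset.sum_const, hfun]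
    simp

lemma hfun_eq (m : ℕ) : hfun m = if 1 ≤ m then (1/2 : ℝ)^m else 0 := by
  unfold hfun
  split
  · unfold lam
    have h1 : (m.factorial : ℝ) ≠ 0 := by exact_mod_cast m.factorial_ne_zero
    field_simp
    rw [← mul_pow]; norm_num
  · rfl

lemma summable_hfun : Summable hfun := by
  apply Summable.of_nonneg_of_le (f := fun m => (1/2 : ℝ)^m)
  · intro m; rw [hfun_eq]; split <;> [positivity; rfl]
  · intro m; rw [hfun_eq]; split <;> [rfl; positivity]
  · exact summable_geometric_of_lt_one (by norm_num) (by norm_num)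

lemma tsum_hfun : ∑' m, hfun m = 1 := by
  have hg : Summable (fun m : ℕ => (1/2 : ℝ)^m) :=
    summable_geometric_of_lt_one (by norm_num) (by norm_num)
  have h2 : ∑' m : ℕ, (1/2 : ℝ)^m = 2 := by
    rw [tsum_geometric_of_lt_one (by norm_num) (by norm_num)]; norm_num
  have h0 : ∑' m : ℕ, (1/2 : ℝ)^m = 1 + ∑' m : ℕ, (1/2 : ℝ)^(m+1) := by
    rw [Summable.tsum_eq_zero_add hg]; norm_num
  have h3 : ∑' m : ℕ, (1/2 : ℝ)^(m+1) = 1 := by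
    rw [h2] at h0; linarith
  calc ∑' m, hfun m = hfun 0 + ∑' m, hfun (m+1) := Summable.tsum_eq_zero_add summable_hfun
  _ = ∑' m : ℕ, (1/2 : ℝ)^(m+1) := by
      rw [hfun]
      simp only [hfun_eq]
      norm_num
  _ = 1 := h3

noncomputable def eqv : List ℕ+ ≃ Σ n, Fin n → ℕ+ := List.equivSigmaTuple

lemma fB_symm_eqv (p : Σ n, Fin n → ℕ+) : fB (eqv.symm p) = fB (List.ofFn p.2) := by
  obtain ⟨n, v⟩ := p
  rfl

lemma summable_sigma_fB : Summable (fun p : Σ n, Fin n → ℕ+ => fB (List.ofFn p.2)) := by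
  apply (summable_sigma_of_nonneg (fun p => fB_nonneg _)).2
  constructor
  · exact fun m => summable_inner m
  · apply Summable.congr summable_hfun
    intro m
    exact (inner_eq m).symm

lemma summable_fB : Summable fB := by
  have := summable_sigma_fB.congr (fun p => (fB_symm_eqv p).symm)
  exact eqv.symm.summable_iff.1 this

set_option maxHeartbeats 1000000 in
lemma tsum_fB : ∑' t, fB t = 1 := by
  rw [← eqv.symm.tsum_eq fB]
  rw [tsum_congr fB_symm_eqv]
  rw [Summable.tsum_sigma' (fun m => summable_inner m) summable_sigma_fB]
  rw [tsum_congr inner_eq]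
  exact tsum_hfun

lemma summable_ind (s : List ℕ+) : Summable (ind s) :=
  Summable.of_nonneg_of_le (fun t => ind_nonneg s t) (fun t => ind_le_fB s t) summable_fB

lemma tau_eq (s : List ℕ+) : tau s = ∑' t, ind s t := by
  have h0 : tau s = ∑' x : ↥{t | t ∈ BSet ∧ slt t s}, lam (x.1.length) := rfl
  rw [h0, tsum_subtype {t | t ∈ BSet ∧ slt t s} (fun t => lam t.length)]
  apply tsum_congr
  intro t
  by_cases h : t ∈ BSet ∧ slt t s
  · rw [Set.indicator_of_mem (by exact h), ind, if_pos h]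
  · rw [Set.indicator_of_notMem (by exact h), ind, if_neg h]

lemma tau_nonneg (s : List ℕ+) : 0 ≤ tau s := by
  rw [tau_eq]; exact tsum_nonneg (fun t => ind_nonneg s t)

-- Part 3: append lemmas and tau structure
lemma nthSeq_append (s : List ℕ+) (a : ℕ+) {j : ℕ} (h1 : 1 ≤ j) (h2 : j ≤ s.length) :
    nthSeq (s ++ [a]) j = nthSeq s j := by
  unfold nthSeq
  rw [List.getD_append _ _ _ _ (by omega)]

lemma nthSeq_append_last (s : List ℕ+) (a : ℕ+) :
    nthSeq (s ++ [a]) (s.length + 1) = a := by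
  unfold nthSeq
  rw [List.getD_append_right _ _ _ _ (by omega)]
  simp

lemma pad_append_one (s : List ℕ+) (j : ℕ) :
    pad (s ++ [1]) j = if j = s.length + 1 then 1 else pad s j := by
  by_cases hj : j = s.length + 1
  · rw [if_pos hj, hj, pad_eq _ (by omega) (by simp), nthSeq_append_last]; rfl
  · rw [if_neg hj]
    rcases Nat.eq_zero_or_pos j with rfl | h1
    · rw [pad_eq_zero _ (Or.inr rfl), pad_eq_zero _ (Or.inr rfl)]
    · rcases Nat.lt_or_ge s.length j with h2 | h2
      · rw [pad_eq_zero s (Or.inl h2), pad_eq_zero _ (Or.inl (by simp; omega))]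
      · rw [pad_eq _ h1 (by simp; omega), pad_eq _ h1 h2, nthSeq_append s 1 h1 h2]

lemma slt_append_one_iff {s t : List ℕ+} : slt t (s ++ [1]) ↔ sle t s := by
  set L := s.length with hL
  rw [sle_iff, slt_iff_lex, slt_iff_lex]
  constructor
  · rintro ⟨j, hag0, hlt0⟩
    have hag : ∀ i, i < j → pad t i = pad (s ++ [1]) i := fun i h => hag0 i h
    have hlt : pad t j < pad (s ++ [1]) j := hlt0
    rcases lt_trichotomy j (L + 1) with hj | hj | hj
    · right
      refine ⟨j, fun i hij => ?_, ?_⟩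
      · have := hag i hij
        rwa [pad_append_one, if_neg (by omega)] at this
      · show pad t j < pad s j
        have : pad (s ++ [1]) j = pad s j := by rw [pad_append_one, if_neg (by omega)]
        rw [← this]; exact hlt
    · left
      apply pad_injective
      have hlt' : pad t j < 1 := by
        have : pad (s ++ [1]) j = 1 := by rw [pad_append_one, if_pos hj]
        rw [← this]; exact hlt
      have htj : pad t j = 0 := by omega
      have hlen : t.length < j := by
        by_contra hc
        have := (pad_ne_zero_iff t j).2 ⟨by omega, by omega⟩
        exact this htj
      funext i
      rcases Nat.lt_or_ge i j with hij | hij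
      · have := hag i hij
        rwa [pad_append_one, if_neg (by omega)] at this
      · rw [pad_eq_zero t (Or.inl (by omega)), pad_eq_zero s (Or.inl (by omega))]
    · exfalso
      have h1 : pad t (L+1) = 1 := by
        have := hag (L+1) hj
        rwa [pad_append_one, if_pos rfl] at this
      have h0 : pad (s ++ [1]) j = 0 := by
        rw [pad_append_one, if_neg (by omega), pad_eq_zero s (Or.inl (by omega))]
      rw [h0] at hlt
      omega
  · rintro (rfl | ⟨j, hag0, hlt0⟩)
    · refine ⟨L + 1, fun i hij => ?_, ?_⟩
      · show pad t i = pad (t ++ [1]) i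
        rw [pad_append_one, if_neg (by omega)]
      · show pad t (L+1) < pad (t ++ [1]) (L+1)
        rw [pad_append_one, if_pos rfl, pad_eq_zero t (Or.inl (by omega))]
        norm_num
    · have hag : ∀ i, i < j → pad t i = pad s i := fun i h => hag0 i h
      have hlt' : pad t j < pad s j := hlt0
      have hjL : j ≤ L := by
        have : pad s j ≠ 0 := by omega
        have := (pad_ne_zero_iff s j).1 this
        omega
      refine ⟨j, fun i hij => ?_, ?_⟩
      · show pad t i = pad (s ++ [1]) i
        rw [pad_append_one, if_neg (by omega)]
        exact hag i hij
      · show pad t j < pad (s ++ [1]) j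
        rw [pad_append_one, if_neg (by omega)]
        exact hlt'

lemma append_one_mem_BSet {s : List ℕ+} (hs : s ∈ BSet) : s ++ [1] ∈ BSet := by
  obtain ⟨h1, h2⟩ := hs
  refine ⟨by simp, fun i hi1 hi2 => ?_⟩
  simp only [List.length_append, List.length_cons, List.length_nil] at hi2
  rcases Nat.lt_or_ge s.length i with hc | hc
  · have : i = s.length + 1 := by omega
    rw [this, nthSeq_append_last]
    simpa using hi2
  · rw [nthSeq_append s 1 hi1 hc]
    exact h2 i hi1 hc

lemma length_append_one (s : List ℕ+) : (s ++ [1]).length = s.length + 1 := by simp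

lemma tau_append_one {s : List ℕ+} (hs : s ∈ BSet) :
    tau (s ++ [1]) = tau s + lam s.length := by
  rw [tau_eq, tau_eq]
  have key : ∀ t, ind (s ++ [1]) t = ind s t + (if t = s then lam s.length else 0) := by
    intro t
    by_cases he : t = s
    · subst he
      rw [if_pos rfl, ind, if_pos ⟨hs, slt_append_one_iff.2 (sle_refl t)⟩,
        ind, if_neg (fun hc => slt_irrefl t hc.2)]
      ring
    · rw [if_neg he, add_zero, ind, ind]
      by_cases hb : t ∈ BSet
      · by_cases hl : slt t s
        · rw [if_pos ⟨hb, slt_append_one_iff.2 hl.1⟩, if_pos ⟨hb, hl⟩]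
        · rw [if_neg, if_neg (fun hc => hl hc.2)]
          rintro ⟨-, hc⟩
          rcases sle_iff.1 (slt_append_one_iff.1 hc) with h | h
          · exact he h
          · exact hl h
      · rw [if_neg (fun hc => hb hc.1), if_neg (fun hc => hb hc.1)]
  rw [tsum_congr key, Summable.tsum_add (summable_ind s)
    (summable_of_ne_finset_zero (s := {s}) (fun t ht => if_neg (by simpa using ht)))]
  congr 1
  exact tsum_ite_eq s (fun _ => lam s.length)

lemma tau_gap {s' s : List ℕ+} (h1 : s' ∈ BSet) (hlt : slt s' s) :
    tau s' + lam s'.length ≤ tau s := by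
  rw [← tau_append_one h1, tau_eq, tau_eq]
  apply Summable.tsum_le_tsum _ (summable_ind _) (summable_ind _)
  intro t
  unfold ind
  by_cases hc : t ∈ BSet ∧ slt t (s' ++ [1])
  · rw [if_pos hc, if_pos ⟨hc.1, sle_slt_trans (slt_append_one_iff.1 hc.2) hlt⟩]
  · rw [if_neg hc]
    split <;> simp [le_of_lt (lam_pos _)]

lemma tau_add_lam_le_one {s : List ℕ+} (hs : s ∈ BSet) : tau s + lam s.length ≤ 1 := by
  rw [← tau_append_one hs, tau_eq, ← tsum_fB]
  exact Summable.tsum_le_tsum (fun t => ind_le_fB _ t) (summable_ind _) summable_fB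

lemma one_mem_BSet : [(1 : ℕ+)] ∈ BSet := by
  refine ⟨by simp, fun i hi1 hi2 => ?_⟩
  simp at hi2
  have : i = 1 := by omega
  subst this
  unfold nthSeq
  simp

lemma tau_one_nil : tau [(1 : ℕ+)] = 0 := by
  rw [tau_eq]
  have : ∀ t, ind [(1 : ℕ+)] t = 0 := by
    intro t
    rw [ind, if_neg]
    rintro ⟨⟨htl, -⟩, hslt⟩
    obtain ⟨j, hag, hlt⟩ := slt_iff_lex.1 hslt
    have hgoal : pad t j < pad [(1:ℕ+)] j := hlt
    have hj : j = 1 := by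
      have : pad [(1:ℕ+)] j ≠ 0 := by omega
      have := (pad_ne_zero_iff _ j).1 this
      simp at this
      omega
    subst hj
    have h1 : pad [(1:ℕ+)] 1 = 1 := by
      rw [pad_eq _ le_rfl (by simp)]
      unfold nthSeq
      simp
    rw [h1] at hgoal
    have : pad t 1 = 0 := by omega
    have := (pad_ne_zero_iff t 1).2 ⟨le_rfl, htl⟩
    omega
  rw [tsum_congr this]
  exact tsum_zero

-- Part 4: geometry of circles and loops
lemma phiLoop_mem (n : ℕ) (t : ℝ) : phiLoop n t ∈ Lcirc n := by
  unfold phiLoop Lcirc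
  rw [Metric.mem_sphere, Complex.dist_eq]
  have : Complex.ofReal (-Real.cos (2 * Real.pi * t) / ↑n + 1 / ↑n) +
      Complex.ofReal (Real.sin (2 * Real.pi * t) / ↑n) * Complex.I - ((1 / (n:ℝ) : ℝ) : ℂ)
      = Complex.ofReal (-Real.cos (2 * Real.pi * t) / ↑n) +
        Complex.ofReal (Real.sin (2 * Real.pi * t) / ↑n) * Complex.I := by
    push_cast
    ring
  rw [this, Complex.norm_add_mul_I]
  rw [show (-Real.cos (2 * Real.pi * t) / ↑n)^2 + (Real.sin (2 * Real.pi * t) / ↑n)^2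
      = ((Real.cos (2*Real.pi*t))^2 + (Real.sin (2*Real.pi*t))^2) / (n:ℝ)^2 by ring]
  rw [Real.cos_sq_add_sin_sq]
  rcases Nat.eq_zero_or_pos n with rfl | hn
  · simp
  · rw [show (1/(n:ℝ)^2) = (1/(n:ℝ))^2 by ring, Real.sqrt_sq (by positivity)]

lemma phiLoop_zero (n : ℕ) : phiLoop n 0 = 0 := by
  unfold phiLoop
  norm_num
  rw [neg_div, one_div, neg_add_cancel]

lemma phiLoop_one (n : ℕ) : phiLoop n 1 = 0 := by
  unfold phiLoop
  simp [Real.cos_two_pi, Real.sin_two_pi]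
  rw [neg_div, one_div, neg_add_cancel]

lemma continuous_phiLoop (n : ℕ) : Continuous (phiLoop n) := by
  unfold phiLoop
  fun_prop

lemma Lcirc_inter {m m' : ℕ} {x : ℂ} (hm : 1 ≤ m) (hm' : 1 ≤ m') (hne : m ≠ m')
    (hx : x ∈ Lcirc m) (hx' : x ∈ Lcirc m') : x = 0 := by
  rw [Lcirc, Metric.mem_sphere, Complex.dist_eq] at hx hx'
  have e1 : Complex.normSq (x - ((1/(m:ℝ) : ℝ):ℂ)) = (1/(m:ℝ))^2 := by
    rw [← Complex.sq_norm, hx]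
  have e2 : Complex.normSq (x - ((1/(m':ℝ) : ℝ):ℂ)) = (1/(m':ℝ))^2 := by
    rw [← Complex.sq_norm, hx']
  rw [Complex.normSq_apply] at e1 e2
  simp only [Complex.sub_re, Complex.sub_im, Complex.ofReal_re, Complex.ofReal_im] at e1 e2
  have h1 : (0:ℝ) < 1/(m:ℝ) := by positivity
  have h2 : (0:ℝ) < 1/(m':ℝ) := by positivity
  have hmne : (1/(m:ℝ)) ≠ (1/(m':ℝ)) := by
    intro hc
    rw [div_eq_div_iff (by positivity) (by positivity)] at hc
    simp only [one_mul] at hc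
    exact hne (by exact_mod_cast hc.symm)
  have key : 2*x.re*(1/(m:ℝ)) = 2*x.re*(1/(m':ℝ)) := by nlinarith [e1, e2]
  have hre : x.re = 0 := by
    by_contra ha
    exact hmne (mul_left_cancel₀ (by simpa using ha : 2 * x.re ≠ 0) key)
  have him : x.im = 0 := by
    have : x.im * x.im = 0 := by nlinarith [e1]
    exact mul_self_eq_zero.mp this
  exact Complex.ext hre him

lemma lam_ne_zero (k : ℕ) : lam k ≠ 0 := ne_of_gt (lam_pos k)

lemma cLoop_mem (nseq : ℕ → ℕ) (k : ℕ) (t : ℝ) :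
    cLoop nseq k t ∈ Lcirc (nseq k) ∪ Lcirc (nseq k + 1) := by
  unfold cLoop
  simp only []
  split
  · exact Or.inl (phiLoop_mem _ _)
  · split
    · exact Or.inr (phiLoop_mem _ _)
    · split
      · exact Or.inl (phiLoop_mem _ _)
      · exact Or.inr (phiLoop_mem _ _)

lemma cLoop_zero (nseq : ℕ → ℕ) (k : ℕ) : cLoop nseq k 0 = 0 := by
  unfold cLoop
  norm_num
  exact phiLoop_zero _

lemma cLoop_lam (nseq : ℕ → ℕ) (k : ℕ) : cLoop nseq k (lam k) = 0 := by
  unfold cLoop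
  rw [mul_div_assoc, div_self (lam_ne_zero k)]
  norm_num
  exact phiLoop_zero _

lemma continuous_cLoop (nseq : ℕ → ℕ) (k : ℕ) : Continuous (cLoop nseq k) := by
  unfold cLoop
  simp only []
  have hu : Continuous (fun t : ℝ => 4 * t / lam k) := by fun_prop
  apply Continuous.if_le _ _ hu continuous_const
  · intro x hx
    rw [hx, phiLoop_one]
    rw [if_pos (by norm_num : (1:ℝ) ≤ 2)]
    norm_num
    rw [phiLoop_zero]
  · exact (continuous_phiLoop _).comp hu
  · apply Continuous.if_le _ _ hu continuous_const
    · intro x hx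
      rw [hx]
      rw [if_pos (by norm_num : (2:ℝ) ≤ 3)]
      norm_num [phiLoop_one]
    · exact (continuous_phiLoop _).comp (by fun_prop)
    · apply Continuous.if_le _ _ hu continuous_const
      · intro x hx
        rw [hx]
        norm_num [phiLoop_zero, phiLoop_one]
      · exact (continuous_phiLoop _).comp (by fun_prop)
      · exact (continuous_phiLoop _).comp (by fun_prop)

-- Part 5: iterConcat, pMap
lemma iterConcat_mem {len : ℝ} {f : ℝ → ℂ} {S : Set ℂ} (hf : ∀ y, f y ∈ S) (m : ℕ) (x : ℝ) :
    iterConcat len f m x ∈ S := by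
  induction m generalizing x with
  | zero => exact hf x
  | succ m ih =>
    rw [iterConcat, concatAt]
    split
    · exact hf x
    · exact ih _

lemma iterConcat_apply {len : ℝ} {f : ℝ → ℂ} (hlen : 0 < len) (hf0 : f 0 = 0)
    (hflen : f len = 0) :
    ∀ m N : ℕ, N ≤ m → ∀ r : ℝ, 0 ≤ r → r ≤ len →
      iterConcat len f m (N * len + r) = f r := by
  intro m
  induction m with
  | zero =>
    intro N hN r h0 h1
    have : N = 0 := by omega
    subst this
    norm_num
    rfl
  | succ m ih =>
    intro N hN r h0 h1
    rw [iterConcat, concatAt]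
    rcases Nat.eq_zero_or_pos N with rfl | hNpos
    · rw [if_pos (by simpa using h1)]
      norm_num
    · by_cases hle : (N:ℝ) * len + r ≤ len
      · -- forces N = 1, r = 0
        have hN1 : (1:ℝ) ≤ (N:ℝ) := by exact_mod_cast hNpos
        have hr0 : r = 0 := by nlinarith
        have hN1' : N = 1 := by
          by_contra hc
          have : (2:ℝ) ≤ (N:ℝ) := by exact_mod_cast (by omega : 2 ≤ N)
          nlinarith
        rw [if_pos hle, hN1', hr0]
        norm_num
        rw [hflen, hf0]
      · rw [if_neg hle]
        have : (N:ℝ) * len + r - len = ((N-1 : ℕ):ℝ) * len + r := by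
          have : ((N-1:ℕ):ℝ) = (N:ℝ) - 1 := by
            have : (1:ℝ) ≤ (N:ℝ) := by exact_mod_cast hNpos
            push_cast [Nat.cast_sub hNpos]
            ring
          rw [this]; ring
        rw [this]
        exact ih (N-1) (by omega) r h0 h1

lemma iterConcat_zero_eval {len : ℝ} {f : ℝ → ℂ} (hlen : 0 < len) (m : ℕ) :
    iterConcat len f m 0 = f 0 := by
  induction m with
  | zero => rfl
  | succ m ih => rw [iterConcat, concatAt, if_pos hlen.le]

lemma continuous_iterConcat {len : ℝ} {f : ℝ → ℂ} (hlen : 0 < len) (hf : Continuous f)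
    (hbd : f len = f 0) (m : ℕ) : Continuous (iterConcat len f m) := by
  induction m with
  | zero => exact hf
  | succ m ih =>
    rw [iterConcat]
    unfold concatAt
    apply Continuous.if_le hf (ih.comp (by fun_prop)) continuous_id continuous_const
    intro x hx
    have hxl : x = len := hx
    simp only [Function.comp, hxl, sub_self, iterConcat_zero_eval hlen, hbd]

lemma nseq_strict_mono {nseq : ℕ → ℕ} (hsep : ∀ k, 1 ≤ k → nseq k + 1 < nseq (k + 1))
    {j k : ℕ} (hj : 1 ≤ j) (hjk : j < k) : nseq j + 1 < nseq k := by
  induction k with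
  | zero => omega
  | succ k ih =>
    rcases Nat.lt_or_ge j k with h | h
    · have := ih h
      have h2 := hsep k (by omega)
      omega
    · have : j = k := by omega
      subst this
      exact hsep j hj

lemma pMap_zero (nseq : ℕ → ℕ) (k : ℕ) : pMap nseq k 0 = 0 := by
  unfold pMap
  split <;> rfl

lemma pMap_of_mem {nseq : ℕ → ℕ} {k : ℕ} {x : ℂ}
    (h : x ∈ Lcirc (nseq k) ∪ Lcirc (nseq k + 1)) : pMap nseq k x = x :=
  if_pos h

lemma pMap_cLoop_self (nseq : ℕ → ℕ) (k : ℕ) (t : ℝ) :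
    pMap nseq k (cLoop nseq k t) = cLoop nseq k t :=
  pMap_of_mem (cLoop_mem nseq k t)

lemma pMap_cLoop_other {nseq : ℕ → ℕ} (hpos : ∀ k, 1 ≤ k → 1 ≤ nseq k)
    (hsep : ∀ k, 1 ≤ k → nseq k + 1 < nseq (k + 1)) {j k : ℕ}
    (hj : 1 ≤ j) (hk : 1 ≤ k) (hne : j ≠ k) (t : ℝ) :
    pMap nseq k (cLoop nseq j t) = 0 := by
  set x := cLoop nseq j t with hx
  by_cases hx0 : x = 0
  · rw [hx0, pMap_zero]
  · rw [pMap, if_neg]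
    intro hxmem
    apply hx0
    have hxj := cLoop_mem nseq j t
    rw [← hx] at hxj
    have hjpos := hpos j hj
    have hkpos := hpos k hk
    have hdisj : ∀ a b : ℕ, (a = nseq j ∨ a = nseq j + 1) → (b = nseq k ∨ b = nseq k + 1) →
        a ≠ b := by
      intro a b ha hb
      rcases Nat.lt_or_ge j k with h | h
      · have := nseq_strict_mono hsep hj h
        omega
      · have hlt : k < j := by omega
        have := nseq_strict_mono hsep hk hlt
        omega
    rcases hxj with h1 | h1 <;> rcases hxmem with h2 | h2
    · exact Lcirc_inter (by omega) (by omega) (hdisj _ _ (Or.inl rfl) (Or.inl rfl)) h1 h2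
    · exact Lcirc_inter (by omega) (by omega) (hdisj _ _ (Or.inl rfl) (Or.inr rfl)) h1 h2
    · exact Lcirc_inter (by omega) (by omega) (hdisj _ _ (Or.inr rfl) (Or.inl rfl)) h1 h2
    · exact Lcirc_inter (by omega) (by omega) (hdisj _ _ (Or.inr rfl) (Or.inr rfl)) h1 h2

lemma Lcirc_subset_HSet {n : ℕ} (hn : 1 ≤ n) : Lcirc n ⊆ HSet :=
  fun x hx => Set.mem_biUnion hn hx

lemma cLoop_mem_HSet {nseq : ℕ → ℕ} (hpos : ∀ k, 1 ≤ k → 1 ≤ nseq k) {k : ℕ} (hk : 1 ≤ k)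
    (t : ℝ) : cLoop nseq k t ∈ HSet := by
  rcases cLoop_mem nseq k t with h | h
  · exact Lcirc_subset_HSet (hpos k hk) h
  · exact Lcirc_subset_HSet (by have := hpos k hk; omega) h

-- Part 6: the finset of length-k sequences in B, disjointness, density
noncomputable def ABFinset (k : ℕ) : Finset (List ℕ+) := (tupFinset k).image List.ofFn

lemma mem_ABFinset {k : ℕ} (hk : 1 ≤ k) {s : List ℕ+} :
    s ∈ ABFinset k ↔ (s ∈ BSet ∧ s.length = k) := by
  rw [ABFinset, Finset.mem_image]
  constructor
  · rintro ⟨v, hv, rfl⟩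
    exact ⟨(ofFn_mem_BSet_iff v).2 ⟨hk, hv⟩, by simp⟩
  · rintro ⟨hB, hlen⟩
    refine ⟨fun i : Fin k => s.get ⟨i.1, by omega⟩, ?_, ?_⟩
    · have heq : List.ofFn (fun i : Fin k => s.get ⟨i.1, by omega⟩) = s := by
        apply List.ext_getElem (by simp [hlen])
        intro i h1 h2
        simp
      exact ((ofFn_mem_BSet_iff _).1 (by rw [heq]; exact hB)).2
    · apply List.ext_getElem (by simp [hlen])
      intro i h1 h2
      simp

lemma card_ABFinset (k : ℕ) : (ABFinset k).card = k.factorial := by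
  rw [ABFinset, Finset.card_image_of_injective _ List.ofFn_injective, card_tupFinset]

lemma sum_lam_le (G : Finset (List ℕ+)) : ∀ {a b : ℝ}, a ≤ b → (∀ s ∈ G, s ∈ BSet) →
    (∀ s ∈ G, a ≤ tau s ∧ tau s + lam s.length ≤ b) →
    ∑ s ∈ G, lam s.length ≤ b - a := by
  induction G using Finset.strongInduction with
  | _ G ih =>
    intro a b hab hG hbound
    rcases G.eq_empty_or_nonempty with rfl | hne
    · simp; linarith
    · obtain ⟨s₀, hs₀, hmax⟩ := Finset.exists_max_image G tau hne
      have hstep : ∀ s ∈ G.erase s₀, a ≤ tau s ∧ tau s + lam s.length ≤ tau s₀ := by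
        intro s hs
        have hsG := Finset.mem_of_mem_erase hs
        have hne' : s ≠ s₀ := Finset.ne_of_mem_erase hs
        refine ⟨(hbound s hsG).1, ?_⟩
        rcases slt_total hne' with h | h
        · exact tau_gap (hG s hsG) h
        · exfalso
          have h1 := tau_gap (hG s₀ hs₀) h
          have h2 := hmax s hsG
          have := lam_pos s₀.length
          linarith
      have hih := ih (G.erase s₀) (Finset.erase_ssubset hs₀) ((hbound s₀ hs₀).1)
        (fun s hs => hG s (Finset.mem_of_mem_erase hs)) hstep
      have hsum : ∑ s ∈ G, lam s.length
          = ∑ s ∈ G.erase s₀, lam s.length + lam s₀.length :=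
        (Finset.sum_erase_add G _ hs₀).symm
      have hb := (hbound s₀ hs₀).2
      have ha := (hbound s₀ hs₀).1
      linarith

lemma exists_right_endpoint_near {t : ℝ} (ht1 : t ≤ 1)
    (hnot : ∀ s ∈ BSet, t ∉ Set.Icc (tau s) (tau s + lam s.length))
    {ε : ℝ} (hε : 0 < ε) (hεt : ε ≤ t) :
    ∃ s ∈ BSet, t - ε < tau s + lam s.length ∧ tau s + lam s.length < t := by
  by_contra hcon
  push_neg at hcon
  -- dichotomy for every s ∈ B
  have hdich : ∀ s ∈ BSet, (tau s + lam s.length ≤ t - ε) ∨ (t ≤ tau s) := by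
    intro s hs
    have h1 := hnot s hs
    rw [Set.mem_Icc, not_and_or, not_le, not_le] at h1
    by_cases h2 : tau s + lam s.length ≤ t - ε
    · exact Or.inl h2
    · push_neg at h2
      have h3 := hcon s hs h2
      rcases h1 with h | h
      · exact Or.inr h.le
      · exfalso; linarith
  have key : ∀ G : Finset (List ℕ+), ∑ s ∈ G, fB s ≤ 1 - ε := by
    intro G
    classical
    have hsplit : ∑ s ∈ G, fB s = ∑ s ∈ G.filter (· ∈ BSet), lam s.length := by
      rw [Finset.sum_filter]
      apply Finset.sum_congr rfl
      intro s _
      rw [fB]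
    set G' := G.filter (· ∈ BSet) with hG'
    have hGmem : ∀ s ∈ G', s ∈ BSet := fun s hs => by
      have := Finset.mem_filter.1 hs; simpa using this.2
    set G1 := G'.filter (fun s => tau s + lam s.length ≤ t - ε) with hG1
    have h1 : ∑ s ∈ G1, lam s.length ≤ (t - ε) - 0 := by
      apply sum_lam_le _ (by linarith) (fun s hs => hGmem s (Finset.mem_filter.1 hs).1)
      intro s hs
      exact ⟨tau_nonneg s, (Finset.mem_filter.1 hs).2⟩
    have h2 : ∑ s ∈ G'.filter (fun s => ¬(tau s + lam s.length ≤ t - ε)), lam s.length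
        ≤ 1 - t := by
      apply sum_lam_le _ (by linarith) (fun s hs => hGmem s (Finset.mem_filter.1 hs).1)
      intro s hs
      obtain ⟨hsG', hc⟩ := Finset.mem_filter.1 hs
      have hB := hGmem s hsG'
      rcases hdich s hB with h | h
      · exact absurd h hc
      · exact ⟨h, tau_add_lam_le_one hB⟩
    rw [hsplit, ← Finset.sum_filter_add_sum_filter_not G' (fun s => tau s + lam s.length ≤ t - ε)]
    linarith
  have := Summable.tsum_le_of_sum_le summable_fB key
  rw [tsum_fB] at this
  linarith

/-- For every `k ≥ 1`, the loop `p_k ∘ σ_1 : [0,1] → ℍ` (a loop based at `(0,0)`) is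
homotopic relative to its endpoints to the `k!`-fold concatenation `c_k ⋯ c_k`
(defined on `[0, k! · λ k]` and affinely reparametrized to `[0,1]`). -/
theorem pMap_sigma_homotopic_iterated_commutator (nseq : ℕ → ℕ)
    (hpos : ∀ k, 1 ≤ k → 1 ≤ nseq k)
    (hlamseq : ∀ k, 1 ≤ k → 8 * Real.pi / (nseq k : ℝ) ≤ lam k)
    (hsep : ∀ k, 1 ≤ k → nseq k + 1 < nseq (k + 1))
    (σ₁ : ℝ → ℂ)
    (hmem : ∀ t ∈ Set.Icc (0 : ℝ) 1, σ₁ t ∈ HSet)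
    (hlip : ∀ t ∈ Set.Icc (0 : ℝ) 1, ∀ t' ∈ Set.Icc (0 : ℝ) 1,
      HEdist (σ₁ t) (σ₁ t') ≤ |t - t'|)
    (hval : ∀ s ∈ BSet, ∀ t ∈ Set.Icc (tau s) (tau (s ++ [1])),
      σ₁ t = cLoop nseq s.length (t - tau s))
    (k : ℕ) (hk : 1 ≤ k) :
    ∃ γ₁ γ₂ : Path (⟨0, zero_mem_HSet⟩ : HSet) (⟨0, zero_mem_HSet⟩ : HSet),
      (∀ t : unitInterval, (γ₁ t : ℂ) = pMap nseq k (σ₁ (t : ℝ))) ∧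
      (∀ t : unitInterval, (γ₂ t : ℂ) =
        iterConcat (lam k) (cLoop nseq k) (Nat.factorial k - 1)
          ((t : ℝ) * (Nat.factorial k * lam k))) ∧
      γ₁.Homotopic γ₂ := by
  classical
  have hlamk := lam_pos k
  have hkfacpos : 0 < k.factorial := k.factorial_pos
  have hkfac : 0 < (k.factorial : ℝ) := by exact_mod_cast hkfacpos
  set L : ℝ := (k.factorial : ℝ) * lam k with hL
  have hLpos : 0 < L := by positivity
  set A : Finset (List ℕ+) := ABFinset k with hA
  have hcardA : A.card = k.factorial := card_ABFinset k
  set F : ℝ → ℂ := iterConcat (lam k) (cLoop nseq k) (k.factorial - 1) with hF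
  have hFcont : Continuous F :=
    continuous_iterConcat hlamk (continuous_cLoop nseq k)
      (by rw [cLoop_lam, cLoop_zero]) _
  have hFmem : ∀ x, F x ∈ HSet := fun x =>
    iterConcat_mem (fun y => cLoop_mem_HSet hpos hk y) _ x
  have hFeval : ∀ N : ℕ, N ≤ k.factorial - 1 → ∀ r : ℝ, 0 ≤ r → r ≤ lam k →
      F ((N:ℝ) * lam k + r) = cLoop nseq k r := fun N hN r h0 h1 =>
    iterConcat_apply hlamk (cLoop_zero nseq k) (cLoop_lam nseq k) _ N hN r h0 h1
  have hFjunction : ∀ N : ℕ, N ≤ k.factorial → F ((N:ℝ) * lam k) = 0 := by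
    intro N hN
    rcases Nat.lt_or_ge N k.factorial with h | h
    · rw [show (N:ℝ) * lam k = (N:ℝ) * lam k + 0 by ring,
        hFeval N (by omega) 0 le_rfl hlamk.le, cLoop_zero]
    · have hNf : 1 ≤ N := by omega
      have hcast : (N:ℝ) * lam k = ((N - 1 : ℕ):ℝ) * lam k + lam k := by
        have h1 : ((N - 1 : ℕ):ℝ) = (N:ℝ) - 1 := by
          push_cast [Nat.cast_sub hNf]
          ring
        rw [h1]; ring
      rw [hcast, hFeval (N-1) (by omega) (lam k) hlamk.le le_rfl, cLoop_lam]
  -- the reparametrization function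
  set Φraw : ℝ → ℝ := fun t => ∑ s ∈ A, max 0 (min (t - tau s) (lam k)) with hΦraw
  have hterm_nonneg : ∀ (t : ℝ) s, 0 ≤ max 0 (min (t - tau s) (lam k)) :=
    fun t s => le_max_left _ _
  have hterm_le : ∀ (t : ℝ) s, max 0 (min (t - tau s) (lam k)) ≤ lam k :=
    fun t s => max_le hlamk.le (min_le_right _ _)
  have hΦraw_nonneg : ∀ t, 0 ≤ Φraw t := fun t =>
    Finset.sum_nonneg (fun s _ => hterm_nonneg t s)
  have hΦraw_le : ∀ t, Φraw t ≤ L := by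
    intro t
    calc Φraw t ≤ ∑ _s ∈ A, lam k := Finset.sum_le_sum (fun s _ => hterm_le t s)
    _ = L := by rw [Finset.sum_const, nsmul_eq_mul, hcardA]
  have hΦraw0 : Φraw 0 = 0 := by
    apply Finset.sum_eq_zero
    intro s _
    have h1 : min (0 - tau s) (lam k) ≤ 0 := by
      apply le_trans (min_le_left _ _)
      have := tau_nonneg s
      linarith
    exact max_eq_left h1
  have hΦraw1 : Φraw 1 = L := by
    have : ∀ s ∈ A, max 0 (min (1 - tau s) (lam k)) = lam k := by
      intro s hs
      obtain ⟨hsB, hslen⟩ := (mem_ABFinset hk).1 hs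
      have h1 : tau s + lam k ≤ 1 := by
        have := tau_add_lam_le_one hsB
        rwa [hslen] at this
      rw [min_eq_right (by linarith), max_eq_right hlamk.le]
    simp only [hΦraw]
    rw [Finset.sum_congr rfl this, Finset.sum_const, nsmul_eq_mul, hcardA]
  have hΦrawcont : Continuous Φraw := by
    apply continuous_finset_sum
    intro s _
    exact (continuous_const.max (((continuous_id.sub continuous_const).min
      continuous_const)))
  -- the key pointwise identity
  have key : ∀ t : ℝ, 0 ≤ t → t ≤ 1 → F (Φraw t) = pMap nseq k (σ₁ t) := by
    intro t ht0 ht1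
    by_cases hU : ∃ s ∈ BSet, t ∈ Set.Icc (tau s) (tau s + lam s.length)
    · obtain ⟨s, hsB, htIcc⟩ := hU
      obtain ⟨hts, htr⟩ := htIcc
      have hval' : σ₁ t = cLoop nseq s.length (t - tau s) := by
        apply hval s hsB
        rw [Set.mem_Icc, tau_append_one hsB]
        exact ⟨hts, htr⟩
      by_cases hsl : s.length = k
      · -- main case : t in an interval of a length-k sequence
        have hsA : s ∈ A := (mem_ABFinset hk).2 ⟨hsB, hsl⟩
        have hterm : ∀ s' ∈ A.erase s,
            max 0 (min (t - tau s') (lam k)) = if slt s' s then lam k else 0 := by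
          intro s' hs'
          have hs'A := Finset.mem_of_mem_erase hs'
          have hs'ne : s' ≠ s := Finset.ne_of_mem_erase hs'
          obtain ⟨hs'B, hs'len⟩ := (mem_ABFinset hk).1 hs'A
          by_cases hlt : slt s' s
          · rw [if_pos hlt]
            have hgap := tau_gap hs'B hlt
            rw [hs'len] at hgap
            rw [min_eq_right (by linarith), max_eq_right hlamk.le]
          · rw [if_neg hlt]
            have hlt' : slt s s' := (slt_total hs'ne.symm).resolve_right hlt
            have hgap := tau_gap hsB hlt'
            rw [hsl] at hgap htr
            apply max_eq_left
            apply le_trans (min_le_left _ _)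
            linarith
        have hsplit : Φraw t = (((A.erase s).filter (fun s' => slt s' s)).card : ℝ) * lam k
            + (t - tau s) := by
          simp only [hΦraw]
          rw [← Finset.add_sum_erase A _ hsA]
          rw [Finset.sum_congr rfl hterm, ← Finset.sum_filter]
          rw [Finset.sum_const, nsmul_eq_mul]
          have hself : max 0 (min (t - tau s) (lam k)) = t - tau s := by
            rw [min_eq_left (by rw [hsl] at htr; linarith),
              max_eq_right (by linarith)]
          rw [hself]
          ring
        have hNle : ((A.erase s).filter (fun s' => slt s' s)).card ≤ k.factorial - 1 := by
          calc ((A.erase s).filter (fun s' => slt s' s)).card ≤ (A.erase s).card :=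
            Finset.card_filter_le _ _
          _ = k.factorial - 1 := by rw [Finset.card_erase_of_mem hsA, hcardA]
        rw [hsplit, hFeval _ hNle (t - tau s) (by linarith)
          (by rw [hsl] at htr; linarith)]
        rw [hval', hsl, pMap_cLoop_self]
      · -- t in an interval of a sequence of different length
        have hjpos : 1 ≤ s.length := hsB.1
        have hterm : ∀ s' ∈ A,
            max 0 (min (t - tau s') (lam k)) = if slt s' s then lam k else 0 := by
          intro s' hs'A
          obtain ⟨hs'B, hs'len⟩ := (mem_ABFinset hk).1 hs'A
          have hs'ne : s' ≠ s := fun hc => hsl (by rw [← hc]; exact hs'len)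
          by_cases hlt : slt s' s
          · rw [if_pos hlt]
            have hgap := tau_gap hs'B hlt
            rw [hs'len] at hgap
            rw [min_eq_right (by linarith), max_eq_right hlamk.le]
          · rw [if_neg hlt]
            have hlt' : slt s s' := (slt_total hs'ne.symm).resolve_right hlt
            have hgap := tau_gap hsB hlt'
            apply max_eq_left
            apply le_trans (min_le_left _ _)
            linarith
        have hsplit : Φraw t = ((A.filter (fun s' => slt s' s)).card : ℝ) * lam k := by
          simp only [hΦraw]
          rw [Finset.sum_congr rfl hterm, ← Finset.sum_filter,
            Finset.sum_const, nsmul_eq_mul]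
        have hNle : (A.filter (fun s' => slt s' s)).card ≤ k.factorial := by
          calc (A.filter (fun s' => slt s' s)).card ≤ A.card := Finset.card_filter_le _ _
          _ = k.factorial := hcardA
        rw [hsplit, hFjunction _ hNle, hval']
        rw [pMap_cLoop_other hpos hsep hjpos hk hsl _]
    · -- t outside all intervals
      push_neg at hU
      have ht0' : 0 < t := by
        rcases eq_or_lt_of_le ht0 with rfl | h
        · exfalso
          apply hU [(1:ℕ+)] one_mem_BSet
          rw [Set.mem_Icc, tau_one_nil]
          constructor
          · linarith
          · have := lam_pos 1
            simp only [List.length_cons, List.length_nil]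
            linarith
        · exact h
      have hz : σ₁ t = 0 := by
        by_contra hne0
        have hnorm : 0 < ‖σ₁ t‖ := by
          rw [norm_pos_iff]; exact hne0
        set ε : ℝ := min ‖σ₁ t‖ t with hε
        have hεpos : 0 < ε := lt_min hnorm ht0'
        have hεt : ε ≤ t := min_le_right _ _
        obtain ⟨s, hsB, h1, h2⟩ := exists_right_endpoint_near ht1 hU hεpos hεt
        set e : ℝ := tau s + lam s.length with he
        have hσe : σ₁ e = 0 := by
          have := hval s hsB e (by
            rw [Set.mem_Icc, tau_append_one hsB]
            constructor
            · have := lam_pos s.length; rw [he]; linarith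
            · rw [he])
          rw [this, he]
          have : tau s + lam s.length - tau s = lam s.length := by ring
          rw [this, cLoop_lam]
        have he0 : 0 ≤ e := by
          have := tau_nonneg s
          have := lam_pos s.length
          rw [he]; linarith
        have he1 : e ≤ 1 := by rw [he]; exact tau_add_lam_le_one hsB
        have hlip' := hlip t ⟨ht0, ht1⟩ e ⟨he0, he1⟩
        have hHE : HEdist (σ₁ t) (σ₁ e) = ‖σ₁ t‖ := by
          rw [hσe, HEdist, if_pos]
          · simp
          · obtain ⟨n, hn, hmemn⟩ := Set.mem_iUnion₂.1 (hmem t ⟨ht0, ht1⟩)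
            refine ⟨n, hn, hmemn, ?_⟩
            rw [Lcirc, Metric.mem_sphere, Complex.dist_eq]
            simp only [zero_sub, norm_neg, Complex.norm_real, Real.norm_eq_abs]
            rw [abs_of_nonneg (by positivity)]
        rw [hHE] at hlip'
        have habs : |t - e| < ε := by
          rw [abs_of_pos (by linarith)]
          linarith
        have : ‖σ₁ t‖ < ε := lt_of_le_of_lt hlip' habs
        have : ε ≤ ‖σ₁ t‖ := min_le_left _ _
        linarith
      have hterm : ∀ s' ∈ A,
          max 0 (min (t - tau s') (lam k)) = if tau s' + lam k ≤ t then lam k else 0 := by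
        intro s' hs'A
        obtain ⟨hs'B, hs'len⟩ := (mem_ABFinset hk).1 hs'A
        have hout := hU s' hs'B
        rw [Set.mem_Icc, not_and_or, not_le, not_le, hs'len] at hout
        by_cases hc : tau s' + lam k ≤ t
        · rw [if_pos hc, min_eq_right (by linarith), max_eq_right hlamk.le]
        · rw [if_neg hc]
          push_neg at hc
          rcases hout with h | h
          · apply max_eq_left
            apply le_trans (min_le_left _ _)
            linarith
          · exfalso; linarith
      have hsplit : Φraw t = ((A.filter (fun s' => tau s' + lam k ≤ t)).card : ℝ) * lam k := by
        simp only [hΦraw]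
        rw [Finset.sum_congr rfl hterm, ← Finset.sum_filter,
          Finset.sum_const, nsmul_eq_mul]
      have hNle : (A.filter (fun s' => tau s' + lam k ≤ t)).card ≤ k.factorial := by
        calc (A.filter _).card ≤ A.card := Finset.card_filter_le _ _
        _ = k.factorial := hcardA
      rw [hsplit, hFjunction _ hNle, hz, pMap_zero]
  -- build the paths
  have hmemF : ∀ u : unitInterval, F ((u:ℝ) * L) ∈ HSet := fun u => hFmem _
  set γ₂ : Path (⟨0, zero_mem_HSet⟩ : HSet) (⟨0, zero_mem_HSet⟩ : HSet) :=
    { toFun := fun u => ⟨F ((u:ℝ) * L), hFmem _⟩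
      continuous_toFun := by
        apply Continuous.subtype_mk
        exact hFcont.comp (continuous_subtype_val.mul continuous_const)
      source' := by
        apply Subtype.ext
        show F ((0:ℝ) * L) = 0
        rw [show (0:ℝ) * L = (0:ℕ) * lam k by push_cast; ring]
        exact hFjunction 0 (by omega)
      target' := by
        apply Subtype.ext
        show F ((1:ℝ) * L) = 0
        rw [show (1:ℝ) * L = ((k.factorial : ℕ):ℝ) * lam k by rw [hL]; push_cast; ring]
        exact hFjunction k.factorial le_rfl } with hγ₂
  set φ : unitInterval → unitInterval := fun u =>
    ⟨Φraw u.1 / L, by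
      constructor
      · positivity
      · rw [div_le_one hLpos]
        exact hΦraw_le _⟩ with hφ
  have hφcont : Continuous φ := by
    apply Continuous.subtype_mk
    exact (hΦrawcont.comp continuous_subtype_val).div_const L
  have hφ0 : φ 0 = 0 := by
    apply Subtype.ext
    show Φraw ((0 : unitInterval) : ℝ) / L = 0
    rw [show ((0 : unitInterval) : ℝ) = 0 from rfl, hΦraw0, zero_div]
  have hφ1 : φ 1 = 1 := by
    apply Subtype.ext
    show Φraw ((1 : unitInterval) : ℝ) / L = 1
    rw [show ((1 : unitInterval) : ℝ) = 1 from rfl, hΦraw1, div_self hLpos.ne']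
  set γ₁ : Path (⟨0, zero_mem_HSet⟩ : HSet) (⟨0, zero_mem_HSet⟩ : HSet) :=
    γ₂.reparam φ hφcont hφ0 hφ1 with hγ₁
  refine ⟨γ₁, γ₂, ?_, ?_, ?_⟩
  · intro t
    have hγ₁t : (γ₁ t : ℂ) = F ((Φraw t.1 / L) * L) := rfl
    rw [hγ₁t, div_mul_cancel₀ _ hLpos.ne']
    exact key t.1 t.2.1 t.2.2
  · intro t
    rfl
  · exact (Path.Homotopic.symm ⟨Path.Homotopy.reparam γ₂ φ hφcont hφ0 hφ1⟩)
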